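/- arXiv:1703.06599 — 7 statements merged into one kernel-verified Lean document; each statement's English description precedes it below -/
import Mathlib

section
/- Let q : [0,h] → ℝ^n be an exact solution of a second-order ODE q'' = f(q, q', t) of class C^{r+2}, with q(0) = q₀, q(h) = q₁, and v₀ = q'(0). Suppose ṽ₀ satisfies the inverse problem q₁ = q₀ + h·ṽ₀ + Σ_{k=2}^{r+1} (h^k/k!)·q^{(k)}(q₀, ṽ₀), where q^{(k)}(q₀, ṽ₀) denotes the k-th time derivative determined by prolonging the vector field at initial data (q₀, ṽ₀). If each prolonged derivative f^{(k-1)} is Lipschitz in the velocity argument, then there exists C > 0 and h₀ > 0 such that ‖ṽ₀ − v₀‖ ≤ C·h^{r+1} for all 0 < h < h₀. -/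
/-- Velocity approximation lemma for the Taylor variational integrator inverse problem:
the approximate initial velocity `vtil h` solving the degree-(r+1) Taylor inverse problem
approximates the exact initial velocity `deriv q 0` to order `h^(r+1)`. -/
theorem velocity_approximation {n r : ℕ}
    (f : (Fin n → ℝ) → (Fin n → ℝ) → ℝ → (Fin n → ℝ))
    (qk : ℕ → (Fin n → ℝ) → (Fin n → ℝ) → (Fin n → ℝ))
    (H : ℝ) (hH : 0 < H)
    (q : ℝ → (Fin n → ℝ)) (hq : ContDiff ℝ (r + 2 : ℕ) q)
    -- q solves the second-order ODE q'' = f(q, q', t) on [0, H]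
    (hode : ∀ t ∈ Set.Icc (0 : ℝ) H, deriv (deriv q) t = f (q t) (deriv q t) t)
    -- qk k gives the k-th time derivative obtained by prolonging the vector field;
    -- it is consistent with the exact solution at the exact initial data (q 0, q' 0)
    (hprol : ∀ k, 2 ≤ k → k ≤ r + 2 → iteratedDeriv k q 0 = qk k (q 0) (deriv q 0))
    -- each prolonged derivative is Lipschitz in the velocity argument
    (hlip : ∀ k, 2 ≤ k → k ≤ r + 1 →
      ∃ M : ℝ, ∀ v w : Fin n → ℝ, ‖qk k (q 0) v - qk k (q 0) w‖ ≤ M * ‖v - w‖)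
    (vtil : ℝ → (Fin n → ℝ))
    -- the inverse problem: q₁ = q₀ + h ṽ₀ + ∑_{k=2}^{r+1} (h^k/k!) q^{(k)}(q₀, ṽ₀)
    (hinv : ∀ h : ℝ, 0 < h → h ≤ H →
      q h = q 0 + h • vtil h + ∑ k ∈ Finset.Icc 2 (r + 1),
        ((h ^ k / (k.factorial : ℝ)) • qk k (q 0) (vtil h))) :
    ∃ C > 0, ∃ h₀ > 0, ∀ h : ℝ, 0 < h → h < h₀ →
      ‖vtil h - deriv q 0‖ ≤ C * h ^ (r + 1) := by
  classical
  set v₀ := deriv q 0 with hv₀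
  -- Lipschitz constants
  have hlip' : ∀ k : ℕ, ∃ M : ℝ, 0 ≤ M ∧ (2 ≤ k → k ≤ r + 1 →
      ∀ v w : Fin n → ℝ, ‖qk k (q 0) v - qk k (q 0) w‖ ≤ M * ‖v - w‖) := by
    intro k
    by_cases hk : 2 ≤ k ∧ k ≤ r + 1
    · obtain ⟨M, hM⟩ := hlip k hk.1 hk.2
      refine ⟨max M 0, le_max_right _ _, fun _ _ v w => ?_⟩
      exact (hM v w).trans (mul_le_mul_of_nonneg_right (le_max_left _ _) (norm_nonneg _))
    · exact ⟨0, le_rfl, fun h1 h2 => absurd ⟨h1, h2⟩ hk⟩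
  choose Mf hMf0 hMf using hlip'
  set M : ℝ := ∑ k ∈ Finset.Icc 2 (r + 1), Mf k with hMdef
  have hM0 : 0 ≤ M := Finset.sum_nonneg fun k _ => hMf0 k
  -- Taylor remainder bound
  have hqOn : ContDiffOn ℝ ((r + 1 : ℕ) + 1) q (Set.Icc 0 H) :=
    hq.contDiffOn.of_le (le_of_eq (by push_cast; ring))
  obtain ⟨C0, hC0⟩ := exists_taylor_mean_remainder_bound hH.le hqOn
  set C1 : ℝ := max C0 0 with hC1def
  have hC10 : 0 ≤ C1 := le_max_right _ _
  -- iterated derivatives within Icc agree with global ones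
  have hderiv : ∀ k : ℕ, k ≤ r + 2 →
      iteratedDerivWithin k q (Set.Icc 0 H) 0 = iteratedDeriv k q 0 := by
    intro k hk
    have h1 : HasFTaylorSeriesUpToOn ((r + 2 : ℕ) : ℕ∞) q (ftaylorSeries ℝ q) (Set.Icc 0 H) :=
      (contDiff_iff_ftaylorSeries.mp hq).hasFTaylorSeriesUpToOn _
    have h2 := h1.eq_iteratedFDerivWithin_of_uniqueDiffOn (m := k) (by exact_mod_cast hk)
      (uniqueDiffOn_Icc hH) (Set.left_mem_Icc.mpr hH.le)
    rw [iteratedDerivWithin_eq_iteratedFDerivWithin, iteratedDeriv_eq_iteratedFDeriv, ← h2]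
    rfl
  refine ⟨2 * C1 + 1, by positivity, min H (min 1 (1 / (2 * (M + 1)))), by positivity, ?_⟩
  intro h hh0 hh1
  have hhH : h ≤ H := le_of_lt (lt_of_lt_of_le hh1 (min_le_left _ _))
  have hh_le1 : h ≤ 1 := le_of_lt (lt_of_lt_of_le hh1 ((min_le_right _ _).trans (min_le_left _ _)))
  have hhM : h * (M + 1) ≤ 1 / 2 := by
    have : h ≤ 1 / (2 * (M + 1)) :=
      le_of_lt (lt_of_lt_of_le hh1 ((min_le_right _ _).trans (min_le_right _ _)))
    have hM1 : (0 : ℝ) < M + 1 := by linarith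
    rw [le_div_iff₀ (by positivity)] at this
    linarith
  have hmem : h ∈ Set.Icc (0 : ℝ) H := ⟨hh0.le, hhH⟩
  have hbound := hC0 h hmem
  -- rewrite the Taylor polynomial
  set d := vtil h - v₀ with hd
  have hTaylor : taylorWithinEval q (r + 1) (Set.Icc 0 H) 0 h
      = q 0 + h • v₀ + ∑ k ∈ Finset.Icc 2 (r + 1),
        ((h ^ k / (k.factorial : ℝ)) • qk k (q 0) v₀) := by
    rw [taylor_within_apply]
    have hsplit : Finset.range (r + 1 + 1) = Finset.range 2 ∪ Finset.Icc 2 (r + 1) := by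
      ext x
      simp [Finset.mem_range, Finset.mem_union, Finset.mem_Icc]
      omega
    rw [hsplit, Finset.sum_union (by
      rw [Finset.disjoint_left]; intro a ha hb
      simp [Finset.mem_range] at ha
      simp [Finset.mem_Icc] at hb
      omega)]
    have h0 : ∑ k ∈ Finset.range 2,
        (((k.factorial : ℝ))⁻¹ * (h - 0) ^ k) • iteratedDerivWithin k q (Set.Icc 0 H) 0
        = q 0 + h • v₀ := by
      rw [Finset.sum_range_succ, Finset.sum_range_one]
      rw [hderiv 0 (by omega), hderiv 1 (by omega), iteratedDeriv_zero, iteratedDeriv_one]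
      simp [hv₀]
    rw [h0]
    congr 1
    apply Finset.sum_congr rfl
    intro k hk
    simp only [Finset.mem_Icc] at hk
    rw [hderiv k (by omega), hprol k hk.1 (by omega), sub_zero, inv_mul_eq_div]
  have hinvh := hinv h hh0 hhH
  -- the key identity:  h • d = (q h - Taylor) + ∑ (h^k/k!) • (qk v₀ - qk vtil)
  have hkey : h • d = (q h - taylorWithinEval q (r + 1) (Set.Icc 0 H) 0 h)
      + ∑ k ∈ Finset.Icc 2 (r + 1),
        ((h ^ k / (k.factorial : ℝ)) • (qk k (q 0) v₀ - qk k (q 0) (vtil h))) := by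
    rw [hTaylor, hinvh, hd]
    simp only [smul_sub, Finset.sum_sub_distrib]
    abel
  have hnorm : h * ‖d‖ ≤ C1 * h ^ (r + 2) + h ^ 2 * M * ‖d‖ := by
    have h1 : ‖h • d‖ = h * ‖d‖ := by
      rw [norm_smul, Real.norm_eq_abs, abs_of_pos hh0]
    have h2 : ‖q h - taylorWithinEval q (r + 1) (Set.Icc 0 H) 0 h‖ ≤ C1 * h ^ (r + 2) := by
      calc ‖q h - taylorWithinEval q (r + 1) (Set.Icc 0 H) 0 h‖
          ≤ C0 * (h - 0) ^ (r + 1 + 1) := hbound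
        _ ≤ C1 * h ^ (r + 2) := by
            rw [sub_zero]
            exact mul_le_mul_of_nonneg_right (le_max_left _ _) (by positivity)
    have h3 : ‖∑ k ∈ Finset.Icc 2 (r + 1),
        ((h ^ k / (k.factorial : ℝ)) • (qk k (q 0) v₀ - qk k (q 0) (vtil h)))‖
        ≤ h ^ 2 * M * ‖d‖ := by
      calc ‖∑ k ∈ Finset.Icc 2 (r + 1),
          ((h ^ k / (k.factorial : ℝ)) • (qk k (q 0) v₀ - qk k (q 0) (vtil h)))‖
          ≤ ∑ k ∈ Finset.Icc 2 (r + 1),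
            ‖(h ^ k / (k.factorial : ℝ)) • (qk k (q 0) v₀ - qk k (q 0) (vtil h))‖ :=
            norm_sum_le _ _
        _ ≤ ∑ k ∈ Finset.Icc 2 (r + 1), h ^ 2 * (Mf k * ‖d‖) := by
            apply Finset.sum_le_sum
            intro k hk
            simp only [Finset.mem_Icc] at hk
            rw [norm_smul, Real.norm_eq_abs, abs_of_nonneg (by positivity)]
            have hlipk : ‖qk k (q 0) v₀ - qk k (q 0) (vtil h)‖ ≤ Mf k * ‖d‖ := by
              rw [hd, norm_sub_rev]
              exact hMf k hk.1 hk.2 (vtil h) v₀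
            have hcoef : h ^ k / (k.factorial : ℝ) ≤ h ^ 2 := by
              have hfac : (1 : ℝ) ≤ (k.factorial : ℝ) := by
                exact_mod_cast k.factorial_pos
              have hpow : h ^ k ≤ h ^ 2 :=
                pow_le_pow_of_le_one hh0.le hh_le1 hk.1
              have h5 : h ^ k / (k.factorial : ℝ) ≤ h ^ k :=
                div_le_self (by positivity) hfac
              exact h5.trans hpow
            calc h ^ k / (k.factorial : ℝ) * ‖qk k (q 0) v₀ - qk k (q 0) (vtil h)‖
                ≤ h ^ k / (k.factorial : ℝ) * (Mf k * ‖d‖) :=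
                  mul_le_mul_of_nonneg_left hlipk (by positivity)
              _ ≤ h ^ 2 * (Mf k * ‖d‖) :=
                  mul_le_mul_of_nonneg_right hcoef (mul_nonneg (hMf0 k) (norm_nonneg _))
        _ = h ^ 2 * M * ‖d‖ := by
            simp_rw [show ∀ k : ℕ, h ^ 2 * (Mf k * ‖d‖) = Mf k * (h ^ 2 * ‖d‖) from
              fun k => by ring, ← Finset.sum_mul, hMdef]
            ring
    calc h * ‖d‖ = ‖h • d‖ := h1.symm
      _ ≤ ‖q h - taylorWithinEval q (r + 1) (Set.Icc 0 H) 0 h‖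
          + ‖∑ k ∈ Finset.Icc 2 (r + 1),
            ((h ^ k / (k.factorial : ℝ)) • (qk k (q 0) v₀ - qk k (q 0) (vtil h)))‖ := by
          rw [hkey]; exact norm_add_le _ _
      _ ≤ C1 * h ^ (r + 2) + h ^ 2 * M * ‖d‖ := add_le_add h2 h3
  -- conclude
  have hdiv : ‖d‖ ≤ C1 * h ^ (r + 1) + h * M * ‖d‖ := by
    have := hnorm
    have hpow : h ^ (r + 2) = h * h ^ (r + 1) := by ring
    have h2 : h ^ 2 = h * h := by ring
    rw [hpow, h2] at this
    nlinarith [norm_nonneg d, hh0]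
  have hhalf : h * M * ‖d‖ ≤ (1 / 2) * ‖d‖ := by
    have : h * M ≤ 1 / 2 := by nlinarith [norm_nonneg d, hh0]
    exact mul_le_mul_of_nonneg_right this (norm_nonneg d)
  have : ‖d‖ ≤ 2 * C1 * h ^ (r + 1) := by linarith
  calc ‖d‖ ≤ 2 * C1 * h ^ (r + 1) := this
    _ ≤ (2 * C1 + 1) * h ^ (r + 1) := by
        apply mul_le_mul_of_nonneg_right (by linarith) (by positivity)
end

section
/- Let L : ℝ^n × ℝ^n → ℝ be Lipschitz continuous in both variables, and let the exact discrete Lagrangian be L_d^E(q₀,q₁;h) = ∫₀^h L(q₀₁(t), q̇₀₁(t)) dt along the Euler–Lagrange boundary-value solution. Suppose (q_d(t), v_d(t)) approximates (q₀₁(t), q̇₀₁(t)) with error O(h^{r+1}) at the quadrature nodes c_i·h, and the quadrature rule with nodes c_i and weights b_i has order s, i.e. ∫₀^h g(t)dt = h·Σᵢ bᵢ·g(cᵢh) + O(h^{s+1}) for sufficiently smooth g. Then the discrete Lagrangian L_d(q₀,q₁;h) = h·Σᵢ bᵢ·L(q_d(cᵢh), v_d(cᵢh)) satisfies L_d(q₀,q₁;h)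 = L_d^E(q₀,q₁;h) + O(h^{min(r+1,s)+1}). -/
/-- Order of accuracy of the Taylor discrete Lagrangian: with an O(h^(r+1))-accurate
approximation of the Euler–Lagrange boundary-value solution at the quadrature nodes and
an order-s quadrature rule, the discrete Lagrangian approximates the exact discrete
Lagrangian to order `min (r+1) s`. -/
theorem discrete_lagrangian_order {E : Type*} [NormedAddCommGroup E] [NormedSpace ℝ E]
    (r s m : ℕ) (K : ℝ)
    (L : E → E → ℝ)
    -- L is Lipschitz continuous in both variables
    (hL : ∀ a b a' b' : E, |L a b - L a' b'| ≤ K * (‖a - a'‖ + ‖b - b'‖))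
    (b c : Fin m → ℝ)
    (q v : ℝ → E)        -- exact Euler–Lagrange boundary-value solution and its velocity
    (qd vd : ℝ → ℝ → E)  -- numerical approximations (depending on the step size h)
    (H : ℝ) (hH : 0 < H)
    -- the quadrature rule has order s for the exact integrand
    (Cq : ℝ) (hquad : ∀ h : ℝ, 0 < h → h ≤ H →
      |(∫ t in (0 : ℝ)..h, L (q t) (v t)) -
        h * ∑ i, b i * L (q (c i * h)) (v (c i * h))| ≤ Cq * h ^ (s + 1))
    -- nodal errors of order O(h^(r+1))
    (Ce : ℝ) (hnode : ∀ h : ℝ, 0 < h → h ≤ H → ∀ i : Fin m,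
      ‖qd h (c i * h) - q (c i * h)‖ ≤ Ce * h ^ (r + 1) ∧
      ‖vd h (c i * h) - v (c i * h)‖ ≤ Ce * h ^ (r + 1)) :
    ∃ C > 0, ∃ h₀ > 0, ∀ h : ℝ, 0 < h → h < h₀ →
      |(h * ∑ i, b i * L (qd h (c i * h)) (vd h (c i * h))) -
        ∫ t in (0 : ℝ)..h, L (q t) (v t)| ≤ C * h ^ (min (r + 1) s + 1) := by
  set M := min (r + 1) s with hM
  refine ⟨|Cq| + (∑ i, |b i|) * (|K| * (2 * |Ce|)) + 1, by positivity, min H 1, by positivity,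
    fun h hh hh' => ?_⟩
  have hH' : h ≤ H := le_of_lt (lt_of_lt_of_le hh' (min_le_left _ _))
  have h1 : h ≤ 1 := le_of_lt (lt_of_lt_of_le hh' (min_le_right _ _))
  have hh0 : (0:ℝ) ≤ h := hh.le
  -- power comparisons
  have hpow1 : h ^ (s + 1) ≤ h ^ (M + 1) :=
    pow_le_pow_of_le_one hh0 h1 (by omega)
  have hpow2 : h ^ (r + 1 + 1) ≤ h ^ (M + 1) :=
    pow_le_pow_of_le_one hh0 h1 (by omega)
  set A := h * ∑ i, b i * L (qd h (c i * h)) (vd h (c i * h)) with hA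
  set B := h * ∑ i, b i * L (q (c i * h)) (v (c i * h)) with hB
  set I := ∫ t in (0:ℝ)..h, L (q t) (v t) with hI
  have hquad' : |I - B| ≤ |Cq| * h ^ (M + 1) := by
    calc |I - B| ≤ Cq * h ^ (s + 1) := hquad h hh hH'
      _ ≤ |Cq| * h ^ (s + 1) := by
          apply mul_le_mul_of_nonneg_right (le_abs_self Cq) (by positivity)
      _ ≤ |Cq| * h ^ (M + 1) := by
          apply mul_le_mul_of_nonneg_left hpow1 (abs_nonneg _)
  have hAB : |A - B| ≤ (∑ i, |b i|) * (|K| * (2 * |Ce|)) * h ^ (M + 1) := by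
    have hterm : ∀ i : Fin m,
        |b i * L (qd h (c i * h)) (vd h (c i * h)) - b i * L (q (c i * h)) (v (c i * h))|
          ≤ |b i| * (|K| * (2 * |Ce|) * h ^ (r + 1)) := by
      intro i
      rw [← mul_sub, abs_mul]
      apply mul_le_mul_of_nonneg_left _ (abs_nonneg _)
      obtain ⟨hq', hv'⟩ := hnode h hh hH' i
      calc |L (qd h (c i * h)) (vd h (c i * h)) - L (q (c i * h)) (v (c i * h))|
          ≤ K * (‖qd h (c i * h) - q (c i * h)‖ + ‖vd h (c i * h) - v (c i * h)‖) :=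
            hL _ _ _ _
        _ ≤ |K| * (‖qd h (c i * h) - q (c i * h)‖ + ‖vd h (c i * h) - v (c i * h)‖) := by
            apply mul_le_mul_of_nonneg_right (le_abs_self K) (by positivity)
        _ ≤ |K| * (2 * |Ce| * h ^ (r + 1)) := by
            apply mul_le_mul_of_nonneg_left _ (abs_nonneg _)
            have h1' : ‖qd h (c i * h) - q (c i * h)‖ ≤ |Ce| * h ^ (r + 1) :=
              hq'.trans (mul_le_mul_of_nonneg_right (le_abs_self Ce) (by positivity))
            have h2' : ‖vd h (c i * h) - v (c i * h)‖ ≤ |Ce| * h ^ (r + 1) :=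
              hv'.trans (mul_le_mul_of_nonneg_right (le_abs_self Ce) (by positivity))
            nlinarith [h1', h2']
        _ = |K| * (2 * |Ce|) * h ^ (r + 1) := by ring
    calc |A - B| = |h| * |∑ i, (b i * L (qd h (c i * h)) (vd h (c i * h))
            - b i * L (q (c i * h)) (v (c i * h)))| := by
          rw [hA, hB, ← mul_sub, abs_mul, ← Finset.sum_sub_distrib]
      _ ≤ h * ∑ i, |b i * L (qd h (c i * h)) (vd h (c i * h))
            - b i * L (q (c i * h)) (v (c i * h))| := by
          rw [abs_of_nonneg hh0]
          exact mul_le_mul_of_nonneg_left (Finset.abs_sum_le_sum_abs _ _) hh0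
      _ ≤ h * ∑ i, |b i| * (|K| * (2 * |Ce|) * h ^ (r + 1)) := by
          apply mul_le_mul_of_nonneg_left (Finset.sum_le_sum fun i _ => hterm i) hh0
      _ = (∑ i, |b i|) * (|K| * (2 * |Ce|)) * h ^ (r + 1 + 1) := by
          rw [← Finset.sum_mul]; ring
      _ ≤ (∑ i, |b i|) * (|K| * (2 * |Ce|)) * h ^ (M + 1) := by
          apply mul_le_mul_of_nonneg_left hpow2 (by positivity)
  calc |A - I| ≤ |A - B| + |I - B| := by
        have : A - I = (A - B) - (I - B) := by ring
        rw [this]; exact abs_sub _ _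
    _ ≤ (∑ i, |b i|) * (|K| * (2 * |Ce|)) * h ^ (M + 1) + |Cq| * h ^ (M + 1) :=
        add_le_add hAB hquad'
    _ ≤ (|Cq| + (∑ i, |b i|) * (|K| * (2 * |Ce|)) + 1) * h ^ (M + 1) := by
        have : (0:ℝ) ≤ h ^ (M + 1) := by positivity
        nlinarith [this]
end

section
/- Let {(bᵢ,cᵢ)}_{i=1}^m be a symmetric quadrature rule on [0,1], i.e. cᵢ = 1 − c_{m−i+1} and bᵢ = b_{m−i+1} for all i. Define nodal approximations q_{cᵢ} and v_{cᵢ} by blending forward Taylor steps from (q₀,ṽ₀) and backward Taylor steps from (q₁,ṽ₁), where ṽ₀ and ṽ₁ solve q₁ = Ψ_h^{(r)}(q₀,ṽ₀) and q₀ = Ψ_{−h}^{(r)}(q₁,ṽ₁). Then the resulting discrete Lagrangian L_d(q₀,q₁;h) = h·Σᵢ bᵢ·L(q_{cᵢ}, v_{cᵢ}) is self-adjoint: L_d(q₀,q₁;h) = −L_d(q₁,q₀;−h). In particular, the exchange (q₀,q₁,h) ↦ (q₁,q₀,−h) sends ṽ₀ ↦ ṽ₁, ṽ₁ ↦ ṽ₀,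 q_{cᵢ} ↦ q_{c_{m−i+1}}, and v_{cᵢ} ↦ v_{c_{m−i+1}}. -/
/-- Self-adjointness of the symmetric Taylor discrete Lagrangian: with a symmetric
quadrature rule and nodal values blended from forward and backward Taylor steps, the
discrete Lagrangian satisfies `L_d(q₀,q₁;h) = -L_d(q₁,q₀;-h)`; moreover the exchange
`(q₀,q₁,h) ↦ (q₁,q₀,-h)` sends `ṽ₀ ↦ ṽ₁`, `ṽ₁ ↦ ṽ₀`, `q_{cᵢ} ↦ q_{c_{m-i+1}}` and
`v_{cᵢ} ↦ v_{c_{m-i+1}}` (index reversal is `Fin.rev`). -/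
theorem symmetric_taylor_Ld_self_adjoint {E : Type*} [NormedAddCommGroup E]
    [NormedSpace ℝ E]
    (r m : ℕ)
    (Ψ : ℕ → ℝ → E → E → E × E)   -- Ψ k h q v : the k-th order Taylor one-step method
    (L : E → E → ℝ)
    (b c : Fin m → ℝ)
    -- symmetric quadrature rule: cᵢ = 1 - c_{m-i+1}, bᵢ = b_{m-i+1}
    (hc : ∀ i : Fin m, c i = 1 - c i.rev)
    (hb : ∀ i : Fin m, b i = b i.rev)
    (v0 v1 : E → E → ℝ → E)
    -- the inverse problems q₁ = Ψ_h^{(r)}(q₀,ṽ₀), q₀ = Ψ_{-h}^{(r)}(q₁,ṽ₁)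
    (hv0 : ∀ q₀ q₁ h, q₁ = (Ψ r h q₀ (v0 q₀ q₁ h)).1)
    (hv1 : ∀ q₀ q₁ h, q₀ = (Ψ r (-h) q₁ (v1 q₀ q₁ h)).1)
    -- the inverse problems have unique solutions
    (huniq : ∀ (h : ℝ) (x v w : E), (Ψ r h x v).1 = (Ψ r h x w).1 → v = w)
    (qc vc : E → E → ℝ → Fin m → E)
    -- blended nodal values
    (hqc : ∀ q₀ q₁ h i, qc q₀ q₁ h i =
      c i • (Ψ r (c i * h) q₀ (v0 q₀ q₁ h)).1 +
      (1 - c i) • (Ψ r (-(1 - c i) * h) q₁ (v1 q₀ q₁ h)).1)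
    (hvc : ∀ q₀ q₁ h i, vc q₀ q₁ h i =
      c i • (Ψ (r - 1) (c i * h) q₀ (v0 q₀ q₁ h)).1 +
      (1 - c i) • (Ψ (r - 1) (-(1 - c i) * h) q₁ (v1 q₀ q₁ h)).1)
    (Ld : E → E → ℝ → ℝ)
    (hLd : ∀ q₀ q₁ h, Ld q₀ q₁ h = h * ∑ i, b i * L (qc q₀ q₁ h i) (vc q₀ q₁ h i)) :
    ∀ (q₀ q₁ : E) (h : ℝ),
      Ld q₀ q₁ h = -Ld q₁ q₀ (-h) ∧
      v0 q₁ q₀ (-h) = v1 q₀ q₁ h ∧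
      v1 q₁ q₀ (-h) = v0 q₀ q₁ h ∧
      (∀ i : Fin m, qc q₁ q₀ (-h) i = qc q₀ q₁ h i.rev) ∧
      (∀ i : Fin m, vc q₁ q₀ (-h) i = vc q₀ q₁ h i.rev) := by
  intro q₀ q₁ h
  have hv01 : v0 q₁ q₀ (-h) = v1 q₀ q₁ h := by
    apply huniq (-h) q₁
    rw [← hv0 q₁ q₀ (-h), ← hv1 q₀ q₁ h]
  have hv10 : v1 q₁ q₀ (-h) = v0 q₀ q₁ h := by
    apply huniq h q₀
    have h1 := hv1 q₁ q₀ (-h)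
    rw [neg_neg] at h1
    rw [← h1, ← hv0 q₀ q₁ h]
  have hcrev : ∀ i : Fin m, c i.rev = 1 - c i := by
    intro i
    have := hc i.rev
    rw [Fin.rev_rev] at this
    linarith
  have hqrev : ∀ i : Fin m, qc q₁ q₀ (-h) i = qc q₀ q₁ h i.rev := by
    intro i
    rw [hqc q₁ q₀ (-h) i, hqc q₀ q₁ h i.rev, hv01, hv10, hcrev i]
    have e1 : c i * -h = -(1 - (1 - c i)) * h := by ring
    have e2 : -(1 - c i) * -h = (1 - c i) * h := by ring
    have e3 : (1 : ℝ) - (1 - c i) = c i := by ring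
    rw [e1, e2, e3, add_comm]
  have hvrev : ∀ i : Fin m, vc q₁ q₀ (-h) i = vc q₀ q₁ h i.rev := by
    intro i
    rw [hvc q₁ q₀ (-h) i, hvc q₀ q₁ h i.rev, hv01, hv10, hcrev i]
    have e1 : c i * -h = -(1 - (1 - c i)) * h := by ring
    have e2 : -(1 - c i) * -h = (1 - c i) * h := by ring
    have e3 : (1 : ℝ) - (1 - c i) = c i := by ring
    rw [e1, e2, e3, add_comm]
  refine ⟨?_, hv01, hv10, hqrev, hvrev⟩
  rw [hLd q₀ q₁ h, hLd q₁ q₀ (-h)]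
  have hsum : ∑ i, b i * L (qc q₁ q₀ (-h) i) (vc q₁ q₀ (-h) i)
      = ∑ i, b i * L (qc q₀ q₁ h i) (vc q₀ q₁ h i) := by
    calc ∑ i, b i * L (qc q₁ q₀ (-h) i) (vc q₁ q₀ (-h) i)
        = ∑ i, b i.rev * L (qc q₀ q₁ h i.rev) (vc q₀ q₁ h i.rev) := by
          refine Finset.sum_congr rfl fun i _ => ?_
          rw [hqrev i, hvrev i, hb i]
      _ = ∑ i, b i * L (qc q₀ q₁ h i) (vc q₀ q₁ h i) :=
          Fintype.sum_bijective Fin.rev Fin.rev_bijective _ _ fun i => rfl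
  rw [hsum]
  ring
end

section
/- Let Ψ_h be a one-step method of order r+1 for the first-order system on TQ associated to q'' = f(q,q'), meaning its local truncation error after one step from exact data is O(h^{r+2}). Let ṽ₀ solve the inverse problem π_Q ∘ Ψ_h(q₀, ṽ₀) = q₁, where q₁ is the endpoint of the exact boundary-value solution with q(0)=q₀, q'(0)=v₀. Then ‖ṽ₀ − v₀‖ = O(h^{r+1}). -/
/-- Generalization of the velocity lemma to an arbitrary one-step method of order r+1:
if `Ψ` has local truncation error O(h^{r+2}) relative to the exact flow `Φ`, and `ṽ₀`
solves the inverse problem `π_Q ∘ Ψ_h(q₀,ṽ₀) = q₁` with `q₁` the endpoint of the exact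
boundary-value solution, then `‖ṽ₀ - v₀‖ = O(h^{r+1})`. -/
theorem one_step_velocity_estimate {E : Type*} [NormedAddCommGroup E]
    [NormedSpace ℝ E]
    (r : ℕ) (H : ℝ) (hH : 0 < H)
    (Φ Ψ : ℝ → E × E → E × E)   -- exact flow on TQ and the one-step method
    (q₀ v₀ : E)
    -- Ψ is a method of order r+1: local truncation error O(h^{r+2})
    (Clte : ℝ) (hlte : ∀ h ∈ Set.Icc (0 : ℝ) H, ∀ x : E × E,
      ‖Ψ h x - Φ h x‖ ≤ Clte * h ^ (r + 2))
    -- one-step regularity of the method in the velocity argument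
    (K : ℝ) (hΨlip : ∀ h ∈ Set.Icc (0 : ℝ) H, ∀ u w : E,
      ‖(Ψ h (q₀, u)).1 - (Ψ h (q₀, w)).1 - h • (u - w)‖ ≤ K * h ^ 2 * ‖u - w‖)
    (vt : ℝ → E)
    -- the inverse problem: π_Q ∘ Ψ_h(q₀, ṽ₀) = q₁ = π_Q ∘ Φ_h(q₀, v₀)
    (hinv : ∀ h ∈ Set.Icc (0 : ℝ) H, (Ψ h (q₀, vt h)).1 = (Φ h (q₀, v₀)).1) :
    ∃ C > 0, ∃ h₀ > 0, ∀ h : ℝ, 0 < h → h < h₀ →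
      ‖vt h - v₀‖ ≤ C * h ^ (r + 1) := by

  have hClte : 0 ≤ Clte := by
    have := hlte H ⟨le_of_lt hH, le_refl H⟩ (q₀, v₀)
    have hpos : 0 < H ^ (r + 2) := pow_pos hH _
    nlinarith [norm_nonneg (Ψ H (q₀, v₀) - Φ H (q₀, v₀))]
  set M : ℝ := max K 0 with hM
  have hM0 : 0 ≤ M := le_max_right _ _
  refine ⟨2 * Clte + 1, by linarith, min H (1 / (2 * (M + 1))), ?_, ?_⟩
  · exact lt_min hH (by positivity)
  intro h hh hlt
  have hhH : h ≤ H := le_of_lt (lt_of_lt_of_le hlt (min_le_left _ _))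
  have hmem : h ∈ Set.Icc (0 : ℝ) H := ⟨le_of_lt hh, hhH⟩
  set d := vt h - v₀ with hd
  have h1 := hΨlip h hmem (vt h) v₀
  have h2 := hlte h hmem (q₀, v₀)
  have hinv' := hinv h hmem
  -- ‖h • d‖ ≤ K h² ‖d‖ + Clte h^{r+2}
  have hfst : ‖(Ψ h (q₀, vt h)).1 - (Ψ h (q₀, v₀)).1‖ ≤ Clte * h ^ (r + 2) := by
    rw [hinv']
    calc ‖(Φ h (q₀, v₀)).1 - (Ψ h (q₀, v₀)).1‖
        = ‖(Φ h (q₀, v₀) - Ψ h (q₀, v₀)).1‖ := rfl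
      _ ≤ ‖Φ h (q₀, v₀) - Ψ h (q₀, v₀)‖ := norm_fst_le _
      _ = ‖Ψ h (q₀, v₀) - Φ h (q₀, v₀)‖ := by rw [norm_sub_rev]
      _ ≤ Clte * h ^ (r + 2) := h2
  have hkey : h * ‖d‖ ≤ K * h ^ 2 * ‖d‖ + Clte * h ^ (r + 2) := by
    have : ‖h • d‖ ≤ K * h ^ 2 * ‖d‖ + Clte * h ^ (r + 2) := by
      calc ‖h • d‖ = ‖((Ψ h (q₀, vt h)).1 - (Ψ h (q₀, v₀)).1)
            - ((Ψ h (q₀, vt h)).1 - (Ψ h (q₀, v₀)).1 - h • d)‖ := by rw [sub_sub_cancel]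
        _ ≤ ‖(Ψ h (q₀, vt h)).1 - (Ψ h (q₀, v₀)).1‖
            + ‖(Ψ h (q₀, vt h)).1 - (Ψ h (q₀, v₀)).1 - h • d‖ := norm_sub_le _ _
        _ ≤ Clte * h ^ (r + 2) + K * h ^ 2 * ‖d‖ := add_le_add hfst h1
        _ = K * h ^ 2 * ‖d‖ + Clte * h ^ (r + 2) := by ring
    rwa [norm_smul, Real.norm_eq_abs, abs_of_pos hh] at this
  have hKM : K ≤ M := le_max_left _ _
  have hMh : M * h ≤ 1 / 2 := by
    have h2' : h ≤ 1 / (2 * (M + 1)) := le_of_lt (lt_of_lt_of_le hlt (min_le_right _ _))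
    have : 0 < 2 * (M + 1) := by linarith
    rw [le_div_iff₀ this] at h2'
    nlinarith
  have hdnn : 0 ≤ ‖d‖ := norm_nonneg _
  have hp : 0 ≤ h ^ (r + 1) := pow_nonneg (le_of_lt hh) _
  have hstep : h * ‖d‖ ≤ M * h ^ 2 * ‖d‖ + Clte * h ^ (r + 2) := by
    nlinarith [mul_nonneg (mul_nonneg (sub_nonneg.2 hKM) (sq_nonneg h)) hdnn]
  have hpow : h ^ (r + 2) = h * h ^ (r + 1) := by ring
  rw [hpow] at hstep
  -- divide by h
  have : ‖d‖ ≤ M * h * ‖d‖ + Clte * h ^ (r + 1) := by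
    have := hstep
    nlinarith
  nlinarith
end

section
/- Let L_d : ℝ^n × ℝ^n × ℝ → ℝ be a self-adjoint discrete Lagrangian, i.e. L_d(q₀,q₁;h) = −L_d(q₁,q₀;−h), and assume the discrete Legendre transforms p₀ = −D₁L_d(q₀,q₁;h), p₁ = D₂L_d(q₀,q₁;h) define a one-step map F_h : (q₀,p₀) ↦ (q₁,p₁). Then F_h is a symmetric method: F_{−h} ∘ F_h = id, equivalently F_h⁻¹ = F_{−h}. -/
private lemma gradient_neg' {n : ℕ} (f : EuclideanSpace ℝ (Fin n) → ℝ)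
    (g a : EuclideanSpace ℝ (Fin n)) (hf : HasGradientAt f g a) :
    HasGradientAt (fun x => -f x) (-g) a := by
  rw [hasGradientAt_iff_hasFDerivAt] at hf ⊢
  rw [map_neg]
  exact hf.neg

/-- Marsden–West Theorem 2.4.1: a self-adjoint discrete Lagrangian generates a symmetric
one-step method, i.e. `F_{-h} ∘ F_h = id`. -/
theorem self_adjoint_Ld_gives_symmetric_method {n : ℕ}
    (Ld : EuclideanSpace ℝ (Fin n) → EuclideanSpace ℝ (Fin n) → ℝ → ℝ)
    (D1Ld D2Ld : EuclideanSpace ℝ (Fin n) → EuclideanSpace ℝ (Fin n) → ℝ →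
      EuclideanSpace ℝ (Fin n))
    (hD1 : ∀ a b (h : ℝ), HasGradientAt (fun x => Ld x b h) (D1Ld a b h) a)
    (hD2 : ∀ a b (h : ℝ), HasGradientAt (fun y => Ld a y h) (D2Ld a b h) b)
    -- self-adjointness: L_d(q₀,q₁;h) = -L_d(q₁,q₀;-h)
    (hself : ∀ a b (h : ℝ), Ld a b h = -Ld b a (-h))
    (F : ℝ → EuclideanSpace ℝ (Fin n) × EuclideanSpace ℝ (Fin n) →
      EuclideanSpace ℝ (Fin n) × EuclideanSpace ℝ (Fin n))
    -- the discrete Legendre transforms define the one-step map F_h : (q₀,p₀) ↦ (q₁,p₁)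
    (hF : ∀ (h : ℝ) (q₀ p₀ : EuclideanSpace ℝ (Fin n)),
      p₀ = -(D1Ld q₀ (F h (q₀, p₀)).1 h) ∧
      (F h (q₀, p₀)).2 = D2Ld q₀ (F h (q₀, p₀)).1 h)
    -- the implicit equation defining q₁ has a unique solution
    (huniq : ∀ (h : ℝ) (q₀ p₀ b b' : EuclideanSpace ℝ (Fin n)),
      p₀ = -(D1Ld q₀ b h) → p₀ = -(D1Ld q₀ b' h) → b = b') :
    ∀ (h : ℝ) (z : EuclideanSpace ℝ (Fin n) × EuclideanSpace ℝ (Fin n)),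
      F (-h) (F h z) = z := by
  -- key identity: D1Ld a b h = -D2Ld b a (-h) and D2Ld a b h = -D1Ld b a (-h)
  have key1 : ∀ a b (h : ℝ), D1Ld a b h = -D2Ld b a (-h) := by
    intro a b h
    have h1 : HasGradientAt (fun x => Ld x b h) (D1Ld a b h) a := hD1 a b h
    have h2 : HasGradientAt (fun x => Ld x b h) (-D2Ld b a (-h)) a := by
      have := gradient_neg' (fun x => Ld b x (-h)) (D2Ld b a (-h)) a (hD2 b a (-h))
      exact this.congr_of_eventuallyEq (Filter.Eventually.of_forall fun x => hself x b h)
    exact h1.unique h2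
  have key2 : ∀ a b (h : ℝ), D2Ld a b h = -D1Ld b a (-h) := by
    intro a b h
    have := key1 b a (-h)
    rw [neg_neg] at this
    rw [this, neg_neg]
  intro h z
  obtain ⟨q₀, p₀⟩ := z
  obtain ⟨e1, e2⟩ := hF h q₀ p₀
  set q₁ := (F h (q₀, p₀)).1 with hq₁
  set p₁ := (F h (q₀, p₀)).2 with hp₁
  have hFz : F h (q₀, p₀) = (q₁, p₁) := rfl
  obtain ⟨e3, e4⟩ := hF (-h) q₁ p₁
  -- p₁ = D2Ld q₀ q₁ h = -D1Ld q₁ q₀ (-h)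
  have hp₁' : p₁ = -(D1Ld q₁ q₀ (-h)) := by rw [e2, key2]
  have hq : (F (-h) (q₁, p₁)).1 = q₀ := huniq (-h) q₁ p₁ _ q₀ e3 hp₁'
  have hp : (F (-h) (q₁, p₁)).2 = p₀ := by
    rw [e4, hq, key2, neg_neg, ← e1]
  rw [hFz, Prod.ext_iff]
  exact ⟨hq, hp⟩
end

section
/- Suppose the discrete Lagrangian L_d(·,·;h) approximates the exact discrete Lagrangian with nodal errors: L_d(q₀,q₁;h) = h·Σᵢ bᵢ·L(q(cᵢh) + O(h^{r+1}), q̇(cᵢh) + O(h^r)) where L is Lipschitz in both arguments, and the quadrature rule has order at least r+1. Then L_d(q₀,q₁;h) = L_d^E(q₀,q₁;h) + O(h^{r+1}). -/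
/-- Order of the symmetric Taylor discrete Lagrangian: with nodal position errors
O(h^{r+1}), nodal velocity errors O(h^r), a Lipschitz Lagrangian and a quadrature rule of
order at least r+1, the discrete Lagrangian approximates the exact discrete Lagrangian to
order O(h^{r+1}). -/
theorem symmetric_taylor_Ld_order {E : Type*} [NormedAddCommGroup E] [NormedSpace ℝ E]
    (r m : ℕ) (K : ℝ)
    (L : E → E → ℝ)
    -- L is Lipschitz in both arguments
    (hL : ∀ a b a' b' : E, |L a b - L a' b'| ≤ K * (‖a - a'‖ + ‖b - b'‖))
    (b c : Fin m → ℝ)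
    (q : ℝ → E)          -- exact Euler–Lagrange boundary-value solution
    (qe ve : ℝ → Fin m → E)  -- perturbed nodal values, depending on the step size h
    (H : ℝ) (hH : 0 < H)
    -- the quadrature rule has order at least r+1 for the exact integrand
    (Cq : ℝ) (hquad : ∀ h : ℝ, 0 < h → h ≤ H →
      |(∫ t in (0 : ℝ)..h, L (q t) (deriv q t)) -
        h * ∑ i, b i * L (q (c i * h)) (deriv q (c i * h))| ≤ Cq * h ^ (r + 2))
    -- nodal errors: positions O(h^{r+1}), velocities O(h^r)
    (C1 C2 : ℝ)
    (hqe : ∀ h : ℝ, 0 < h → h ≤ H → ∀ i : Fin m,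
      ‖qe h i - q (c i * h)‖ ≤ C1 * h ^ (r + 1))
    (hve : ∀ h : ℝ, 0 < h → h ≤ H → ∀ i : Fin m,
      ‖ve h i - deriv q (c i * h)‖ ≤ C2 * h ^ r) :
    ∃ C > 0, ∃ h₀ > 0, ∀ h : ℝ, 0 < h → h < h₀ →
      |(h * ∑ i, b i * L (qe h i) (ve h i)) -
        ∫ t in (0 : ℝ)..h, L (q t) (deriv q t)| ≤ C * h ^ (r + 1) := by

  set S := ∑ i, |b i| with hSdef
  have hS0 : 0 ≤ S := Finset.sum_nonneg fun i _ => abs_nonneg _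
  have hM0 : 0 ≤ S * |K| * (|C1| * H + |C2|) := by positivity
  have hCq0 : 0 ≤ |Cq| * H := by positivity
  refine ⟨|Cq| * H + S * |K| * (|C1| * H + |C2|) + 1, by linarith, H, hH, fun h hh hhH => ?_⟩
  have hhH' : h ≤ H := hhH.le
  have hp0 : (0:ℝ) ≤ h ^ (r + 1) := by positivity
  have hp0' : (0:ℝ) ≤ h ^ r := by positivity
  -- quadrature part
  have hq := hquad h hh hhH'
  have hquad' : |(∫ t in (0 : ℝ)..h, L (q t) (deriv q t)) -
      h * ∑ i, b i * L (q (c i * h)) (deriv q (c i * h))| ≤ |Cq| * H * h ^ (r + 1) := by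
    calc |(∫ t in (0 : ℝ)..h, L (q t) (deriv q t)) -
        h * ∑ i, b i * L (q (c i * h)) (deriv q (c i * h))| ≤ Cq * h ^ (r + 2) := hq
      _ ≤ |Cq| * h ^ (r + 2) := by
          have : (0:ℝ) ≤ h ^ (r + 2) := by positivity
          exact mul_le_mul_of_nonneg_right (le_abs_self Cq) this
      _ = |Cq| * h * h ^ (r + 1) := by ring
      _ ≤ |Cq| * H * h ^ (r + 1) := by
          have : |Cq| * h ≤ |Cq| * H := mul_le_mul_of_nonneg_left hhH' (abs_nonneg _)
          exact mul_le_mul_of_nonneg_right this hp0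
  -- nodal part
  have hterm : ∀ i : Fin m, |L (qe h i) (ve h i) - L (q (c i * h)) (deriv q (c i * h))| ≤
      |K| * (|C1| * h ^ (r + 1) + |C2| * h ^ r) := by
    intro i
    have h1 := hqe h hh hhH' i
    have h2 := hve h hh hhH' i
    have hn0 : (0:ℝ) ≤ ‖qe h i - q (c i * h)‖ + ‖ve h i - deriv q (c i * h)‖ := by positivity
    have h1' : ‖qe h i - q (c i * h)‖ ≤ |C1| * h ^ (r + 1) :=
      h1.trans (mul_le_mul_of_nonneg_right (le_abs_self C1) hp0)
    have h2' : ‖ve h i - deriv q (c i * h)‖ ≤ |C2| * h ^ r :=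
      h2.trans (mul_le_mul_of_nonneg_right (le_abs_self C2) hp0')
    calc |L (qe h i) (ve h i) - L (q (c i * h)) (deriv q (c i * h))|
        ≤ K * (‖qe h i - q (c i * h)‖ + ‖ve h i - deriv q (c i * h)‖) := hL _ _ _ _
      _ ≤ |K| * (‖qe h i - q (c i * h)‖ + ‖ve h i - deriv q (c i * h)‖) :=
          mul_le_mul_of_nonneg_right (le_abs_self K) hn0
      _ ≤ |K| * (|C1| * h ^ (r + 1) + |C2| * h ^ r) := by
          apply mul_le_mul_of_nonneg_left _ (abs_nonneg K)
          linarith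
  have hsum : |(h * ∑ i, b i * L (qe h i) (ve h i)) -
      h * ∑ i, b i * L (q (c i * h)) (deriv q (c i * h))| ≤
      S * |K| * (|C1| * H + |C2|) * h ^ (r + 1) := by
    have hsplit : (h * ∑ i, b i * L (qe h i) (ve h i)) -
        h * ∑ i, b i * L (q (c i * h)) (deriv q (c i * h)) =
        h * ∑ i, b i * (L (qe h i) (ve h i) - L (q (c i * h)) (deriv q (c i * h))) := by
      rw [Finset.mul_sum, Finset.mul_sum, Finset.mul_sum, ← Finset.sum_sub_distrib]
      congr 1; ext i; ring
    rw [hsplit, abs_mul, abs_of_pos hh]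
    have habs : |∑ i, b i * (L (qe h i) (ve h i) - L (q (c i * h)) (deriv q (c i * h)))| ≤
        S * (|K| * (|C1| * h ^ (r + 1) + |C2| * h ^ r)) := by
      calc |∑ i, b i * (L (qe h i) (ve h i) - L (q (c i * h)) (deriv q (c i * h)))|
          ≤ ∑ i, |b i * (L (qe h i) (ve h i) - L (q (c i * h)) (deriv q (c i * h)))| :=
            Finset.abs_sum_le_sum_abs _ _
        _ ≤ ∑ i, |b i| * (|K| * (|C1| * h ^ (r + 1) + |C2| * h ^ r)) := by
            apply Finset.sum_le_sum
            intro i _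
            rw [abs_mul]
            exact mul_le_mul_of_nonneg_left (hterm i) (abs_nonneg _)
        _ = S * (|K| * (|C1| * h ^ (r + 1) + |C2| * h ^ r)) := by
            rw [← Finset.sum_mul]
      
    calc h * |∑ i, b i * (L (qe h i) (ve h i) - L (q (c i * h)) (deriv q (c i * h)))|
        ≤ h * (S * (|K| * (|C1| * h ^ (r + 1) + |C2| * h ^ r))) :=
          mul_le_mul_of_nonneg_left habs hh.le
      _ = S * |K| * (|C1| * h + |C2|) * h ^ (r + 1) := by
          rw [pow_succ]
          ring
      _ ≤ S * |K| * (|C1| * H + |C2|) * h ^ (r + 1) := by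
          apply mul_le_mul_of_nonneg_right _ hp0
          apply mul_le_mul_of_nonneg_left _ (by positivity)
          have := mul_le_mul_of_nonneg_left hhH' (abs_nonneg C1)
          linarith
  calc |(h * ∑ i, b i * L (qe h i) (ve h i)) -
      ∫ t in (0 : ℝ)..h, L (q t) (deriv q t)|
      ≤ |(h * ∑ i, b i * L (qe h i) (ve h i)) -
          h * ∑ i, b i * L (q (c i * h)) (deriv q (c i * h))| +
        |(∫ t in (0 : ℝ)..h, L (q t) (deriv q t)) -
          h * ∑ i, b i * L (q (c i * h)) (deriv q (c i * h))| := by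
        rw [abs_sub_comm ((∫ t in (0 : ℝ)..h, L (q t) (deriv q t))) _]
        exact abs_sub_le _ _ _
    _ ≤ S * |K| * (|C1| * H + |C2|) * h ^ (r + 1) + |Cq| * H * h ^ (r + 1) :=
        add_le_add hsum hquad'
    _ ≤ (|Cq| * H + S * |K| * (|C1| * H + |C2|) + 1) * h ^ (r + 1) := by nlinarith
end

section
/- Let Ψ̃_h : ℝ^{2n} → ℝ^{2n} be the map implicitly defined by p₀ = −D₁L_d(q₀,q₁;h), p₁ = D₂L_d(q₀,q₁;h) for a twice continuously differentiable discrete Lagrangian L_d with D₁D₂L_d invertible (regularity). Then Ψ̃_h is symplectic: its derivative DΨ̃_h satisfies (DΨ̃_h)ᵀ J (DΨ̃_h) = J, where J is the standard symplectic matrix. -/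
open scoped RealInnerProductSpace

section Aux
open ContinuousLinearMap InnerProductSpace

theorem aux_symplectic {E : Type*} [NormedAddCommGroup E] [InnerProductSpace ℝ E]
    [CompleteSpace E]
    (Ld : E → E → ℝ) (hLd : ContDiff ℝ 2 (fun z : E × E => Ld z.1 z.2))
    (Ψ : E × E → E × E) (hΨ : Differentiable ℝ Ψ)
    (hmap : ∀ q₀ p₀ : E,
      HasGradientAt (fun x => Ld x (Ψ (q₀, p₀)).1) (-p₀) q₀ ∧
      HasGradientAt (fun y => Ld q₀ y) ((Ψ (q₀, p₀)).2) (Ψ (q₀, p₀)).1)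
    (z u v : E × E) :
    ⟪(fderiv ℝ Ψ z u).1, (fderiv ℝ Ψ z v).2⟫ - ⟪(fderiv ℝ Ψ z u).2, (fderiv ℝ Ψ z v).1⟫
      = ⟪u.1, v.2⟫ - ⟪u.2, v.1⟫ := by
  set f : E × E → ℝ := fun w => Ld w.1 w.2 with hfdef
  have hLd' : ContDiff ℝ 2 f := hLd
  have hfd : Differentiable ℝ f := hLd'.differentiable (by norm_num)
  have hfd' : Differentiable ℝ (fderiv ℝ f) :=
    (hLd'.fderiv_right (m := 1) (by norm_num)).differentiable (by norm_num)
  set z₁ : E × E := (z.1, (Ψ z).1) with hz₁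
  set S : (E × E) →L[ℝ] (E × E) →L[ℝ] ℝ := fderiv ℝ (fderiv ℝ f) z₁ with hSdef
  have hsymm : ∀ a b, S a b = S b a := fun a b =>
    second_derivative_symmetric (fun y => (hfd y).hasFDerivAt) (hfd' z₁).hasFDerivAt a b
  set ι₁ : E →L[ℝ] E × E := ContinuousLinearMap.inl ℝ E E with hι₁
  set ι₂ : E →L[ℝ] E × E := ContinuousLinearMap.inr ℝ E E with hι₂
  obtain ⟨D, hD⟩ : ∃ D : (E →L[ℝ] ℝ) →L[ℝ] E, ∀ A : E →L[ℝ] ℝ, D A = (toDual ℝ E).symm A :=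
    ⟨by exact (toDual ℝ E).symm.toContinuousLinearEquiv.toContinuousLinearMap, fun A => rfl⟩
  set T₁ : ((E × E) →L[ℝ] ℝ) →L[ℝ] E :=
    D.comp ((ContinuousLinearMap.compL ℝ E (E × E) ℝ).flip ι₁) with hT₁def
  set T₂ : ((E × E) →L[ℝ] ℝ) →L[ℝ] E :=
    D.comp ((ContinuousLinearMap.compL ℝ E (E × E) ℝ).flip ι₂) with hT₂def
  have hT₁ : ∀ (A : (E × E) →L[ℝ] ℝ) (c : E), ⟪T₁ A, c⟫ = A (c, 0) := by
    intro A c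
    simp [hT₁def, hD, hι₁, InnerProductSpace.toDual_symm_apply]
  have hT₂ : ∀ (A : (E × E) →L[ℝ] ℝ) (c : E), ⟪T₂ A, c⟫ = A (0, c) := by
    intro A c
    simp [hT₂def, hD, hι₂, InnerProductSpace.toDual_symm_apply]
  have hgrad₁ : ∀ w : E × E, gradient (fun x => Ld x w.2) w.1 = T₁ (fderiv ℝ f w) := by
    intro w
    have h1 : HasFDerivAt (fun x : E => (x, w.2)) ι₁ w.1 := hasFDerivAt_prodMk_left _ _
    have h2 : HasFDerivAt (fun x : E => Ld x w.2) ((fderiv ℝ f w).comp ι₁) w.1 :=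
      HasFDerivAt.comp (g := f) (f := fun x : E => (x, w.2)) w.1 (hfd (w.1, w.2)).hasFDerivAt h1
    show (toDual ℝ E).symm (fderiv ℝ (fun x : E => Ld x w.2) w.1) = _
    rw [h2.fderiv]
    simp [hT₁def, hD]
  have hgrad₂ : ∀ w : E × E, gradient (fun y => Ld w.1 y) w.2 = T₂ (fderiv ℝ f w) := by
    intro w
    have h1 : HasFDerivAt (fun y : E => (w.1, y)) ι₂ w.2 := hasFDerivAt_prodMk_right _ _
    have h2 : HasFDerivAt (fun y : E => Ld w.1 y) ((fderiv ℝ f w).comp ι₂) w.2 :=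
      (hfd (w.1, w.2)).hasFDerivAt.comp w.2 h1
    show (toDual ℝ E).symm (fderiv ℝ (fun y : E => Ld w.1 y) w.2) = _
    rw [h2.fderiv]
    simp [hT₂def, hD]
  set DΨ : (E × E) →L[ℝ] E × E := fderiv ℝ Ψ z with hDΨ
  set fstL : (E × E) →L[ℝ] E := ContinuousLinearMap.fst ℝ E E with hfst
  set sndL : (E × E) →L[ℝ] E := ContinuousLinearMap.snd ℝ E E with hsnd
  set φ : E × E → E × E := fun w => (w.1, (Ψ w).1) with hφdef
  set φ' : (E × E) →L[ℝ] E × E := fstL.prod (fstL.comp DΨ) with hφ'def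
  have hφ : HasFDerivAt φ φ' z :=
    HasFDerivAt.prodMk hasFDerivAt_fst (HasFDerivAt.comp z hasFDerivAt_fst (hΨ z).hasFDerivAt)
  have hφ'app : ∀ w : E × E, φ' w = (w.1, (DΨ w).1) := fun w => rfl
  have hφz : φ z = z₁ := rfl
  -- relation (1)
  have hrel₁ : ∀ w : E × E, T₁ (fderiv ℝ f (φ w)) = -w.2 := by
    intro w
    rw [← hgrad₁ (φ w)]
    have h := ((hmap w.1 w.2).1).gradient
    simpa using h
  have hcomp₁ : HasFDerivAt (fun w => T₁ (fderiv ℝ f (φ w))) ((T₁.comp S).comp φ') z := by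
    have hG : HasFDerivAt (⇑T₁ ∘ fderiv ℝ f) (T₁.comp S) z₁ :=
      @HasFDerivAt.comp ℝ _ (E × E) _ _ ((E × E) →L[ℝ] ℝ) _ _ E _ _ (fderiv ℝ f) S z₁ ⇑T₁ T₁
        T₁.hasFDerivAt (hfd' z₁).hasFDerivAt
    exact hG.comp z hφ
  have heq₁ : (T₁.comp S).comp φ' = -sndL := by
    rw [funext hrel₁] at hcomp₁
    exact hcomp₁.unique (hasFDerivAt_snd.neg)
  have key₁ : ∀ (w : E × E) (c : E), S (φ' w) (c, 0) = -⟪w.2, c⟫ := by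
    intro w c
    have h' : T₁ (S (φ' w)) = -w.2 := by
      have := ContinuousLinearMap.ext_iff.mp heq₁ w
      simpa [hsnd] using this
    rw [← hT₁ (S (φ' w)) c, h']
    exact inner_neg_left _ _
  -- relation (2)
  have hrel₂ : ∀ w : E × E, T₂ (fderiv ℝ f (φ w)) = (Ψ w).2 := by
    intro w
    rw [← hgrad₂ (φ w)]
    have h := ((hmap w.1 w.2).2).gradient
    simpa using h
  have hcomp₂ : HasFDerivAt (fun w => T₂ (fderiv ℝ f (φ w))) ((T₂.comp S).comp φ') z := by
    have hG : HasFDerivAt (⇑T₂ ∘ fderiv ℝ f) (T₂.comp S) z₁ :=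
      @HasFDerivAt.comp ℝ _ (E × E) _ _ ((E × E) →L[ℝ] ℝ) _ _ E _ _ (fderiv ℝ f) S z₁ ⇑T₂ T₂
        T₂.hasFDerivAt (hfd' z₁).hasFDerivAt
    exact hG.comp z hφ
  have heq₂ : (T₂.comp S).comp φ' = sndL.comp DΨ := by
    rw [funext hrel₂] at hcomp₂
    exact hcomp₂.unique (hasFDerivAt_snd.comp z (hΨ z).hasFDerivAt)
  have key₂ : ∀ (w : E × E) (c : E), ⟪(DΨ w).2, c⟫ = S (φ' w) (0, c) := by
    intro w c
    have h' : T₂ (S (φ' w)) = (DΨ w).2 := by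
      have := ContinuousLinearMap.ext_iff.mp heq₂ w
      simpa [hsnd] using this
    rw [← h', hT₂]
  -- final computation
  have hsplit : ∀ (a b : E) (c : E × E), S (a, b) c = S (a, 0) c + S (0, b) c := by
    intro a b c
    have h : ((a, b) : E × E) = (a, 0) + (0, b) := by simp
    rw [h, map_add, ContinuousLinearMap.add_apply]
  set Qu : E := (DΨ u).1 with hQu
  set Qv : E := (DΨ v).1 with hQv
  have e1 : ⟪(DΨ u).1, (DΨ v).2⟫ = S (v.1, Qv) (0, Qu) := by
    rw [real_inner_comm, key₂ v, hφ'app v]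
  have e2 : ⟪(DΨ u).2, (DΨ v).1⟫ = S (u.1, Qu) (0, Qv) := by
    rw [key₂ u, hφ'app u]
  have k1 : ∀ (w : E × E) (c : E), S (w.1, (DΨ w).1) (c, 0) = -⟪w.2, c⟫ := by
    intro w c
    rw [← hφ'app w]; exact key₁ w c
  have e3 : S (0, Qu) (v.1, 0) = -⟪u.2, v.1⟫ - S (u.1, 0) (v.1, 0) := by
    have := k1 u v.1
    rw [hsplit] at this
    linarith
  have e4 : S (0, Qv) (u.1, 0) = -⟪v.2, u.1⟫ - S (v.1, 0) (u.1, 0) := by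
    have := k1 v u.1
    rw [hsplit] at this
    linarith
  have c1 : S (0, Qv) (0, Qu) = S (0, Qu) (0, Qv) := hsymm _ _
  have c2 : S (v.1, 0) (0, Qu) = S (0, Qu) (v.1, 0) := hsymm _ _
  have c3 : S (u.1, 0) (0, Qv) = S (0, Qv) (u.1, 0) := hsymm _ _
  have c4 : S (u.1, 0) (v.1, 0) = S (v.1, 0) (u.1, 0) := hsymm _ _
  rw [e1, e2]
  linarith [hsplit v.1 Qv ((0:E), Qu), hsplit u.1 Qu ((0:E), Qv), c1, c2, c3, c4, e3, e4,
    real_inner_comm u.1 v.2]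

end Aux

/-- The discrete Hamiltonian map generated by a C², regular discrete Lagrangian via the
discrete Legendre transforms is symplectic: its derivative preserves the canonical
symplectic form ω((a₁,a₂),(b₁,b₂)) = ⟪a₁,b₂⟫ - ⟪a₂,b₁⟫. -/
theorem discrete_hamiltonian_map_symplectic {n : ℕ}
    (Ld : EuclideanSpace ℝ (Fin n) → EuclideanSpace ℝ (Fin n) → ℝ)
    (hLd : ContDiff ℝ 2
      (fun z : EuclideanSpace ℝ (Fin n) × EuclideanSpace ℝ (Fin n) => Ld z.1 z.2))
    -- regularity: the mixed second derivative D₁D₂L_d is invertible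
    (hreg : ∀ a b : EuclideanSpace ℝ (Fin n),
      Function.Bijective (fun u : EuclideanSpace ℝ (Fin n) =>
        fderiv ℝ (fun x => gradient (fun y => Ld x y) b) a u))
    (Ψ : EuclideanSpace ℝ (Fin n) × EuclideanSpace ℝ (Fin n) →
      EuclideanSpace ℝ (Fin n) × EuclideanSpace ℝ (Fin n))
    (hΨ : Differentiable ℝ Ψ)
    -- Ψ is implicitly defined by p₀ = -D₁L_d(q₀,q₁), p₁ = D₂L_d(q₀,q₁)
    (hmap : ∀ q₀ p₀ : EuclideanSpace ℝ (Fin n),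
      HasGradientAt (fun x => Ld x (Ψ (q₀, p₀)).1) (-p₀) q₀ ∧
      HasGradientAt (fun y => Ld q₀ y) ((Ψ (q₀, p₀)).2) (Ψ (q₀, p₀)).1) :
    ∀ z u v : EuclideanSpace ℝ (Fin n) × EuclideanSpace ℝ (Fin n),
      ⟪(fderiv ℝ Ψ z u).1, (fderiv ℝ Ψ z v).2⟫ - ⟪(fderiv ℝ Ψ z u).2, (fderiv ℝ Ψ z v).1⟫
        = ⟪u.1, v.2⟫ - ⟪u.2, v.1⟫ := by
  exact fun z u v => aux_symplectic Ld hLd Ψ hΨ hmap z u v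
end
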